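/- Let (θ_k, r_k) be the global AEGD iterates. Then for every step size η > 0 and every k ≥ 0 the energy identity r_{k+1}² = r_k² − (r_{k+1} − r_k)² − η⁻¹ ‖θ_{k+1} − θ_k‖² holds. -/

import Mathlib

open Filter Topology Finset

/-- Energy identity for the global AEGD iterates:
`r_{k+1}² = r_k² − (r_{k+1} − r_k)² − η⁻¹ ‖θ_{k+1} − θ_k‖²` for every step size
`η > 0` and every `k ≥ 0`. -/
theorem aegd_energy_identity {n : ℕ} (f : EuclideanSpace ℝ (Fin n) → ℝ)
    (hf : Differentiable ℝ f) (c : ℝ) (hc : 0 < c) (hfc : ∀ x, 0 < f x + c)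
    (g : EuclideanSpace ℝ (Fin n) → ℝ) (hg : g = fun x => Real.sqrt (f x + c))
    (η : ℝ) (hη : 0 < η)
    (θ : ℕ → EuclideanSpace ℝ (Fin n)) (r : ℕ → ℝ)
    (hr0 : r 0 = g (θ 0))
    (hr : ∀ k, r (k + 1) = r k / (1 + 2 * η * ‖gradient g (θ k)‖ ^ 2))
    (hθ : ∀ k, θ (k + 1) = θ k - (2 * η * r (k + 1)) • gradient g (θ k)) :
    ∀ k : ℕ, (r (k + 1)) ^ 2
      = (r k) ^ 2 - (r (k + 1) - r k) ^ 2 - η⁻¹ * ‖θ (k + 1) - θ k‖ ^ 2 := by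
  intro k
  set G : ℝ := ‖gradient g (θ k)‖ ^ 2 with hG
  have hGnn : 0 ≤ G := by positivity
  have hD : (0:ℝ) < 1 + 2 * η * G := by positivity
  have hrk : r k = r (k + 1) * (1 + 2 * η * G) := by
    rw [hr k]; field_simp; rfl
  have hnorm : ‖θ (k + 1) - θ k‖ ^ 2 = (2 * η * r (k + 1)) ^ 2 * G := by
    rw [hθ k]
    have : θ k - (2 * η * r (k + 1)) • gradient g (θ k) - θ k
        = -((2 * η * r (k + 1)) • gradient g (θ k)) := by abel
    rw [this, norm_neg, norm_smul, mul_pow, hG, Real.norm_eq_abs, sq_abs]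
  rw [hnorm, hrk]
  field_simp
  ring
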